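/- Let ζ be a primitive Δ-th root of unity and let G = {(θ, η) : θ^Δ = η^Δ = 1, θⁿ = θ^r η^s = η^m} ⊆ ℂ× × ℂ×, where Δ = |nm − rm − sn| ≠ 0. Then G is isomorphic to the quotient L/(ΔℤΔ²) where L = {(p,q) ∈ ℤ² : pn − qm ≡ pr − q(m−s) ≡ 0 (mod Δ)}, and G has order Δ. Moreover G is cyclic if and only if gcd(m, n, r, s) = 1. -/

import Mathlib

set_option maxHeartbeats 4000000 in
theorem stmt4 (n m r s : ℕ) (Δ : ℕ)
    (hΔdef : Δ = ((n * m : ℤ) - r * m - s * n).natAbs) (hΔ : Δ ≠ 0)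
    (ζ : ℂ) (hζ : IsPrimitiveRoot ζ Δ)
    (G : Subgroup (ℂˣ × ℂˣ))
    (hG : (G : Set (ℂˣ × ℂˣ)) =
      {p | p.1 ^ Δ = 1 ∧ p.2 ^ Δ = 1 ∧ p.1 ^ n = p.1 ^ r * p.2 ^ s ∧
        p.1 ^ r * p.2 ^ s = p.2 ^ m})
    (L : AddSubgroup (ℤ × ℤ))
    (hL : (L : Set (ℤ × ℤ)) =
      {pq | (Δ : ℤ) ∣ pq.1 * n - pq.2 * m ∧
        (Δ : ℤ) ∣ pq.1 * r - pq.2 * ((m : ℤ) - s)}) :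
    Nonempty (Multiplicative
        (↥L ⧸ (AddSubgroup.closure
          ({((Δ : ℤ), (0 : ℤ)), ((0 : ℤ), (Δ : ℤ))} : Set (ℤ × ℤ))).addSubgroupOf L) ≃* ↥G)
    ∧ Nat.card G = Δ
    ∧ (IsCyclic ↥G ↔ Nat.gcd (Nat.gcd m n) (Nat.gcd r s) = 1) := by
  haveI : NeZero Δ := ⟨hΔ⟩
  have hΔpos : 0 < Δ := Nat.pos_of_ne_zero hΔ
  have hΔz : (0:ℤ) < (Δ:ℤ) := by exact_mod_cast hΔpos
  have hζu : IsUnit ζ := hζ.isUnit hΔ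
  set u0 : ℂˣ := hζu.unit with hu0
  have hu0v : (u0 : ℂ) = ζ := hζu.unit_spec
  set E : ℤ × ℤ → ℂˣ × ℂˣ := fun w => (u0 ^ w.1, u0 ^ w.2) with hE
  have hupow : ∀ a : ℤ, u0 ^ a = 1 ↔ (Δ:ℤ) ∣ a := by
    intro a
    rw [← hζ.zpow_eq_one_iff_dvd a, Units.ext_iff, Units.val_zpow_eq_zpow_val, hu0v,
      Units.val_one]
  have hpow2 : ∀ a b : ℤ, u0 ^ a = u0 ^ b ↔ (Δ:ℤ) ∣ a - b := by
    intro a b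
    rw [← mul_inv_eq_one, ← zpow_sub, hupow]
  have hnatpow : ∀ (a : ℤ) (k : ℕ), (u0 ^ a) ^ k = u0 ^ (a * k) := by
    intro a k
    rw [← zpow_natCast (u0 ^ a) k, ← zpow_mul]
  have hEone : ∀ w : ℤ × ℤ, E w = 1 ↔ ((Δ:ℤ) ∣ w.1 ∧ (Δ:ℤ) ∣ w.2) := by
    intro w
    rw [hE, Prod.ext_iff]
    simp only [Prod.fst_one, Prod.snd_one, hupow]
  have hEadd : ∀ w w' : ℤ × ℤ, E (w + w') = E w * E w' := by
    intro w w'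
    simp [hE, Prod.ext_iff, zpow_add]
  have hEinj : ∀ w w' : ℤ × ℤ, E w = E w' ↔
      ((Δ:ℤ) ∣ w.1 - w'.1 ∧ (Δ:ℤ) ∣ w.2 - w'.2) := by
    intro w w'
    rw [hE, Prod.ext_iff]
    simp only [hpow2]
  -- membership in G of E w
  have hmemG : ∀ w : ℤ × ℤ, E w ∈ G ↔
      ((Δ:ℤ) ∣ w.1 * n - (w.1 * r + w.2 * s) ∧ (Δ:ℤ) ∣ w.1 * r + w.2 * s - w.2 * m) := by
    intro w
    have hm : E w ∈ G ↔ E w ∈ (G : Set (ℂˣ × ℂˣ)) := Iff.rfl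
    rw [hm, hG, Set.mem_setOf_eq]
    show ((u0 ^ w.1) ^ Δ = 1 ∧ (u0 ^ w.2) ^ Δ = 1 ∧
      (u0 ^ w.1) ^ n = (u0 ^ w.1) ^ r * (u0 ^ w.2) ^ s ∧
      (u0 ^ w.1) ^ r * (u0 ^ w.2) ^ s = (u0 ^ w.2) ^ m) ↔ _
    simp only [hnatpow, ← zpow_add, hpow2, hupow]
    constructor
    · rintro ⟨-, -, h3, h4⟩
      exact ⟨h3, h4⟩
    · rintro ⟨h3, h4⟩
      exact ⟨dvd_mul_left _ _, dvd_mul_left _ _, h3, h4⟩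
  have hmemL : ∀ w : ℤ × ℤ, w ∈ L ↔
      ((Δ:ℤ) ∣ w.1 * n - w.2 * m ∧ (Δ:ℤ) ∣ w.1 * r - w.2 * ((m:ℤ) - s)) := by
    intro w
    have hm : w ∈ L ↔ w ∈ (L : Set (ℤ × ℤ)) := Iff.rfl
    rw [hm, hL, Set.mem_setOf_eq]
  have hGL : ∀ w : ℤ × ℤ, E w ∈ G ↔ w ∈ L := by
    intro w
    rw [hmemG, hmemL]
    constructor
    · rintro ⟨h1, h2⟩
      constructor
      · have := dvd_add h1 h2
        have he : w.1 * n - (w.1 * r + w.2 * s) + (w.1 * r + w.2 * s - w.2 * m)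
            = w.1 * n - w.2 * m := by ring
        rwa [he] at this
      · have he : w.1 * r + w.2 * s - w.2 * m = w.1 * r - w.2 * ((m:ℤ) - s) := by ring
        rwa [he] at h2
    · rintro ⟨h1, h2⟩
      have h2' : (Δ:ℤ) ∣ w.1 * r + w.2 * s - w.2 * m := by
        have he : w.1 * r - w.2 * ((m:ℤ) - s) = w.1 * r + w.2 * s - w.2 * m := by ring
        rwa [he] at h2
      refine ⟨?_, h2'⟩
      have := dvd_sub h1 h2'
      have he : w.1 * n - w.2 * m - (w.1 * r + w.2 * s - w.2 * m)
          = w.1 * n - (w.1 * r + w.2 * s) := by ring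
      rwa [he] at this
  have hsurjE : ∀ x : ℂˣ × ℂˣ, x ∈ G → ∃ w : ℤ × ℤ, w ∈ L ∧ E w = x := by
    intro x hx
    have hx' : x ∈ (G : Set (ℂˣ × ℂˣ)) := hx
    rw [hG, Set.mem_setOf_eq] at hx'
    obtain ⟨h1, h2, -, -⟩ := hx'
    have h1' : ((x.1 : ℂ)) ^ Δ = 1 := by
      rw [← Units.val_pow_eq_pow_val, h1, Units.val_one]
    have h2' : ((x.2 : ℂ)) ^ Δ = 1 := by
      rw [← Units.val_pow_eq_pow_val, h2, Units.val_one]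
    obtain ⟨a, -, ha⟩ := hζ.eq_pow_of_pow_eq_one h1'
    obtain ⟨b, -, hb⟩ := hζ.eq_pow_of_pow_eq_one h2'
    have hEx : E ((a:ℤ), (b:ℤ)) = x := by
      rw [hE]
      apply Prod.ext
      · apply Units.ext
        show ((u0 ^ (a:ℤ) : ℂˣ) : ℂ) = _
        rw [Units.val_zpow_eq_zpow_val, hu0v, zpow_natCast, ha]
      · apply Units.ext
        show ((u0 ^ (b:ℤ) : ℂˣ) : ℂ) = _
        rw [Units.val_zpow_eq_zpow_val, hu0v, zpow_natCast, hb]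
    exact ⟨_, (hGL _).1 (hEx ▸ hx), hEx⟩
  -- the closure subgroup
  have hclos : ∀ w : ℤ × ℤ,
      w ∈ AddSubgroup.closure ({((Δ:ℤ), (0:ℤ)), ((0:ℤ), (Δ:ℤ))} : Set (ℤ × ℤ)) ↔
      ((Δ:ℤ) ∣ w.1 ∧ (Δ:ℤ) ∣ w.2) := by
    intro w
    constructor
    · intro hw
      let S : AddSubgroup (ℤ × ℤ) :=
      { carrier := {w | (Δ:ℤ) ∣ w.1 ∧ (Δ:ℤ) ∣ w.2}
        zero_mem' := ⟨dvd_zero _, dvd_zero _⟩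
        add_mem' := fun ha hb => ⟨dvd_add ha.1 hb.1, dvd_add ha.2 hb.2⟩
        neg_mem' := fun ha => ⟨dvd_neg.2 ha.1, dvd_neg.2 ha.2⟩ }
      have hle : AddSubgroup.closure ({((Δ:ℤ), (0:ℤ)), ((0:ℤ), (Δ:ℤ))} : Set (ℤ × ℤ)) ≤ S := by
        rw [AddSubgroup.closure_le]
        rintro x (rfl | rfl)
        · exact ⟨dvd_refl _, dvd_zero _⟩
        · exact ⟨dvd_zero _, dvd_refl _⟩
      exact hle hw
    · rintro ⟨⟨k1, hk1⟩, ⟨k2, hk2⟩⟩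
      have hw : w = k1 • (((Δ:ℤ), (0:ℤ)) : ℤ × ℤ) + k2 • (((0:ℤ), (Δ:ℤ)) : ℤ × ℤ) := by
        apply Prod.ext <;> simp [smul_eq_mul, hk1, hk2, mul_comm]
      rw [hw]
      exact add_mem
        (AddSubgroup.zsmul_mem _ (AddSubgroup.subset_closure (by simp)) _)
        (AddSubgroup.zsmul_mem _ (AddSubgroup.subset_closure (by simp)) _)
  -- the homomorphism f : L →+ Additive G
  have hmem' : ∀ x : ↥L, E (x : ℤ × ℤ) ∈ G := fun x => (hGL _).2 x.2
  let f : ↥L →+ Additive ↥G :=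
  { toFun := fun x => Additive.ofMul (⟨E (x : ℤ × ℤ), hmem' x⟩ : ↥G)
    map_zero' := by
      show Additive.ofMul (⟨E ((0 : ↥L) : ℤ × ℤ), hmem' 0⟩ : ↥G) = 0
      have h0 : E ((0 : ↥L) : ℤ × ℤ) = 1 := by
        rw [(hEone _)]
        simp
      have h1 : (⟨E ((0 : ↥L) : ℤ × ℤ), hmem' 0⟩ : ↥G) = 1 := Subtype.ext h0
      rw [h1, ofMul_one]
    map_add' := by
      intro x y
      show Additive.ofMul (⟨E ((x + y : ↥L) : ℤ × ℤ), hmem' (x + y)⟩ : ↥G)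
        = Additive.ofMul (⟨E (x : ℤ × ℤ), hmem' x⟩ : ↥G)
          + Additive.ofMul (⟨E (y : ℤ × ℤ), hmem' y⟩ : ↥G)
      have h1 : E ((x + y : ↥L) : ℤ × ℤ) = E (x : ℤ × ℤ) * E (y : ℤ × ℤ) := by
        rw [← hEadd]; rfl
      rw [← ofMul_mul]
      exact congrArg Additive.ofMul (Subtype.ext h1) }
  have hfsurj : Function.Surjective f := by
    intro y
    obtain ⟨w, hwL, hwE⟩ := hsurjE (y.toMul : ℂˣ × ℂˣ) (y.toMul).2
    refine ⟨⟨w, hwL⟩, ?_⟩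
    show Additive.ofMul (⟨E w, _⟩ : ↥G) = y
    have : (⟨E w, hmem' ⟨w, hwL⟩⟩ : ↥G) = y.toMul := Subtype.ext hwE
    rw [this]
    rfl
  have hker : f.ker = (AddSubgroup.closure
      ({((Δ:ℤ), (0:ℤ)), ((0:ℤ), (Δ:ℤ))} : Set (ℤ × ℤ))).addSubgroupOf L := by
    ext x
    rw [AddMonoidHom.mem_ker, AddSubgroup.mem_addSubgroupOf, hclos, ← hEone]
    show Additive.ofMul (⟨E (x : ℤ × ℤ), hmem' x⟩ : ↥G) = 0 ↔ _
    rw [← ofMul_one]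
    constructor
    · intro h
      have := Additive.ofMul.injective h
      exact congrArg Subtype.val this
    · intro h
      congr 1
      exact Subtype.ext h
  constructor
  · rw [← hker]
    exact ⟨AddEquiv.toMultiplicativeLeft (QuotientAddGroup.quotientKerEquivOfSurjective f hfsurj)⟩

  -- ===== integer setup for the counting argument =====
  obtain ⟨D, hDdef⟩ : ∃ x : ℤ, x = (n * m : ℤ) - r * m - s * n := ⟨_, rfl⟩
  have habs : (Δ:ℤ) = |D| := by
    rw [hΔdef, Int.natCast_natAbs, hDdef]
  obtain ⟨G0, hG0def⟩ : ∃ x : ℕ, x = Int.gcd (r:ℤ) ((s:ℤ) - m) := ⟨_, rfl⟩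
  have hgc : (G0:ℤ) ∣ (r:ℤ) := by rw [hG0def]; exact Int.gcd_dvd_left _ _
  have hgdd : (G0:ℤ) ∣ ((s:ℤ) - m) := by rw [hG0def]; exact Int.gcd_dvd_right _ _
  obtain ⟨cg, hcg⟩ := hgc
  obtain ⟨dg, hdg⟩ := hgdd
  obtain ⟨u, hu⟩ : ∃ x : ℤ, x = Int.gcdA (r:ℤ) ((s:ℤ) - m) := ⟨_, rfl⟩
  obtain ⟨v, hv⟩ : ∃ x : ℤ, x = Int.gcdB (r:ℤ) ((s:ℤ) - m) := ⟨_, rfl⟩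
  have hbez : (G0:ℤ) = (r:ℤ) * u + ((s:ℤ) - m) * v := by
    rw [hG0def, hu, hv]; exact Int.gcd_eq_gcd_ab _ _
  have hG0ne : G0 ≠ 0 := by
    intro h0
    rw [h0] at hG0def
    obtain ⟨hc0, hd0⟩ := Int.gcd_eq_zero_iff.mp hG0def.symm
    have hD0 : D = 0 := by rw [hDdef]; linear_combination (-(m:ℤ)) * hc0 + (-(n:ℤ)) * hd0
    rw [hD0] at habs
    simp at habs
    omega
  have hgpos : (0:ℤ) < (G0:ℤ) := by exact_mod_cast Nat.pos_of_ne_zero hG0ne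
  have hgne : (G0:ℤ) ≠ 0 := ne_of_gt hgpos
  have hkey : cg * u + dg * v = 1 := by
    apply mul_left_cancel₀ hgne
    linear_combination -hbez - u * hcg - v * hdg
  obtain ⟨ε, hεdef⟩ : ∃ x : ℤ, x = if 0 ≤ D then 1 else -1 := ⟨_, rfl⟩
  have hεD : D = ε * (Δ:ℤ) := by
    rw [hεdef]; split_ifs with h
    · rw [habs, abs_of_nonneg h]; ring
    · rw [habs, abs_of_neg (lt_of_not_ge h)]; ring
  have hεε : ε * ε = 1 := by rw [hεdef]; split_ifs <;> norm_num
  have hgΔ : (G0:ℤ) ∣ (Δ:ℤ) := by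
    have hgD : (G0:ℤ) ∣ D := by
      refine ⟨-((n:ℤ) * dg + (m:ℤ) * cg), ?_⟩
      rw [hDdef]; linear_combination (-(n:ℤ)) * hdg + (-(m:ℤ)) * hcg
    have h1 : (Δ:ℤ) = ε * D := by linear_combination (-(Δ:ℤ)) * hεε + (-ε) * hεD
    rw [h1]; exact hgD.mul_left ε
  obtain ⟨P, hP⟩ := hgΔ
  have hPpos : 0 < P := by nlinarith [hΔz]
  have hPne : P ≠ 0 := ne_of_gt hPpos
  obtain ⟨q, hq⟩ : ∃ x : ℤ, x = u * n - v * m := ⟨_, rfl⟩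
  obtain ⟨A1, hA1def⟩ : ∃ x : ℤ, x = dg * ε * q + u * P := ⟨_, rfl⟩
  obtain ⟨A2, hA2def⟩ : ∃ x : ℤ, x = -(cg * ε * q) + v * P := ⟨_, rfl⟩
  have hndm : (n:ℤ) * dg + (m:ℤ) * cg = -(ε * P) := by
    apply mul_left_cancel₀ hgne
    linear_combination (-(m:ℤ)) * hcg + (-(n:ℤ)) * hdg + (-ε) * hP - hεD + hDdef
  have hA1lem : (n:ℤ) * A1 - (m:ℤ) * A2 = 0 := by
    linear_combination (q * ε) * hndm + (-(P * q)) * hεε + (-P) * hq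
      + (n:ℤ) * hA1def + (-(m:ℤ)) * hA2def
  have hA2q : (r:ℤ) * A1 + ((s:ℤ) - m) * A2 = (Δ:ℤ) := by
    linear_combination (q * ε * dg + P * u) * hcg + (-(q * ε * cg) + P * v) * hdg
      + (P * (G0:ℤ)) * hkey - hP + (r:ℤ) * hA1def + ((s:ℤ) - (m:ℤ)) * hA2def
  have hB1 : (n:ℤ) * ((m:ℤ) - s) - (m:ℤ) * (r:ℤ) = D := by
    linear_combination -hDdef
  have hVA1 : cg * A1 + dg * A2 = P := by
    linear_combination P * hkey + cg * hA1def + dg * hA2def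
  have hVA2 : -v * A1 + u * A2 = -(ε * q) := by
    linear_combination (-(q * ε)) * hkey + (-v) * hA1def + u * hA2def
  have hVB1 : cg * ((m:ℤ) - s) + dg * (r:ℤ) = 0 := by
    linear_combination dg * hcg + (-cg) * hdg
  have hVB2 : -v * ((m:ℤ) - s) + u * (r:ℤ) = (G0:ℤ) := by
    linear_combination -hbez
  have hABmem : ∀ k j : ℤ,
      ((k * A1 + j * ((m:ℤ) - s), k * A2 + j * (r:ℤ)) : ℤ × ℤ) ∈ L := by
    intro k j
    rw [hmemL]
    constructor
    · show (Δ:ℤ) ∣ (k * A1 + j * ((m:ℤ) - s)) * n - (k * A2 + j * (r:ℤ)) * m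
      have he : (k * A1 + j * ((m:ℤ) - s)) * n - (k * A2 + j * (r:ℤ)) * m
          = (Δ:ℤ) * (j * ε) := by
        linear_combination k * hA1lem + j * hB1 + j * hεD
      rw [he]; exact dvd_mul_right _ _
    · show (Δ:ℤ) ∣ (k * A1 + j * ((m:ℤ) - s)) * r - (k * A2 + j * (r:ℤ)) * ((m:ℤ) - s)
      have he : (k * A1 + j * ((m:ℤ) - s)) * r - (k * A2 + j * (r:ℤ)) * ((m:ℤ) - s)
          = (Δ:ℤ) * k := by
        linear_combination k * hA2q
      rw [he]; exact dvd_mul_right _ _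
  have hcanc1 : ∀ x : ℤ, (Δ:ℤ) ∣ P * x → (G0:ℤ) ∣ x := by
    rintro x ⟨t, ht⟩
    refine ⟨t, mul_left_cancel₀ hPne ?_⟩
    rw [ht, hP]; ring
  have hcanc2 : ∀ x : ℤ, (Δ:ℤ) ∣ (G0:ℤ) * x → P ∣ x := by
    rintro x ⟨t, ht⟩
    refine ⟨t, mul_left_cancel₀ hgne ?_⟩
    rw [ht, hP]; ring
  have haux : ∀ M x : ℤ, -M < x → x < M → M ∣ x → x = 0 := by
    rintro M x h1 h2 ⟨t, rfl⟩
    have hM : 0 < M := by linarith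
    rcases lt_trichotomy t 0 with h | h | h
    · have ht1 : t ≤ -1 := by omega
      have : M * t ≤ M * (-1) := mul_le_mul_of_nonneg_left ht1 hM.le
      linarith
    · rw [h, mul_zero]
    · have ht1 : 1 ≤ t := by omega
      have : M * 1 ≤ M * t := mul_le_mul_of_nonneg_left ht1 hM.le
      linarith
  obtain ⟨P', hP'def⟩ : ∃ x : ℕ, x = P.toNat := ⟨_, rfl⟩
  have hP' : (P' : ℤ) = P := by rw [hP'def]; exact Int.toNat_of_nonneg hPpos.le
  have hG0P' : G0 * P' = Δ := by
    have : ((G0 * P' : ℕ) : ℤ) = ((Δ:ℕ) : ℤ) := by push_cast; rw [hP']; linarith [hP]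
    exact_mod_cast this
  -- the bijection
  set F : Fin G0 × Fin P' → ↥G := fun kj =>
    ⟨E ((kj.1.val : ℤ) * A1 + (kj.2.val : ℤ) * ((m:ℤ) - s),
        (kj.1.val : ℤ) * A2 + (kj.2.val : ℤ) * (r:ℤ)), (hGL _).2 (hABmem _ _)⟩ with hF
  have hFinj : Function.Injective F := by
    rintro ⟨k, j⟩ ⟨k', j'⟩ hFeq
    have hEeq : E ((k.val : ℤ) * A1 + (j.val : ℤ) * ((m:ℤ) - s),
        (k.val : ℤ) * A2 + (j.val : ℤ) * (r:ℤ))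
        = E ((k'.val : ℤ) * A1 + (j'.val : ℤ) * ((m:ℤ) - s),
        (k'.val : ℤ) * A2 + (j'.val : ℤ) * (r:ℤ)) := congrArg Subtype.val hFeq
    rw [hEinj] at hEeq
    have hd1 : (Δ:ℤ) ∣ ((k.val : ℤ) * A1 + (j.val : ℤ) * ((m:ℤ) - s))
        - ((k'.val : ℤ) * A1 + (j'.val : ℤ) * ((m:ℤ) - s)) := hEeq.1
    have hd2 : (Δ:ℤ) ∣ ((k.val : ℤ) * A2 + (j.val : ℤ) * (r:ℤ))
        - ((k'.val : ℤ) * A2 + (j'.val : ℤ) * (r:ℤ)) := hEeq.2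
    have hc1 : (Δ:ℤ) ∣ P * ((k.val : ℤ) - k'.val) := by
      have hcomb : cg * (((k.val : ℤ) * A1 + (j.val : ℤ) * ((m:ℤ) - s))
          - ((k'.val : ℤ) * A1 + (j'.val : ℤ) * ((m:ℤ) - s)))
          + dg * (((k.val : ℤ) * A2 + (j.val : ℤ) * (r:ℤ))
          - ((k'.val : ℤ) * A2 + (j'.val : ℤ) * (r:ℤ)))
          = P * ((k.val : ℤ) - k'.val) := by
        linear_combination ((k.val : ℤ) - k'.val) * hVA1 + ((j.val : ℤ) - j'.val) * hVB1
      rw [← hcomb]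
      exact dvd_add (hd1.mul_left cg) (hd2.mul_left dg)
    have hk1 : ((k.val : ℤ)) < G0 := by exact_mod_cast k.isLt
    have hk2 : ((k'.val : ℤ)) < G0 := by exact_mod_cast k'.isLt
    have hk0 : (0:ℤ) ≤ (k.val : ℤ) := Int.natCast_nonneg _
    have hk0' : (0:ℤ) ≤ (k'.val : ℤ) := Int.natCast_nonneg _
    have hK : (k.val : ℤ) - k'.val = 0 :=
      haux (G0:ℤ) _ (by linarith) (by linarith) (hcanc1 _ hc1)
    have hc2 : (Δ:ℤ) ∣ (G0:ℤ) * ((j.val : ℤ) - j'.val) := by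
      have hcomb : -v * (((k.val : ℤ) * A1 + (j.val : ℤ) * ((m:ℤ) - s))
          - ((k'.val : ℤ) * A1 + (j'.val : ℤ) * ((m:ℤ) - s)))
          + u * (((k.val : ℤ) * A2 + (j.val : ℤ) * (r:ℤ))
          - ((k'.val : ℤ) * A2 + (j'.val : ℤ) * (r:ℤ)))
          = (G0:ℤ) * ((j.val : ℤ) - j'.val) := by
        linear_combination ((k.val : ℤ) - k'.val) * hVA2 + ((j.val : ℤ) - j'.val) * hVB2
          + (-(ε * q)) * hK
      rw [← hcomb]
      exact dvd_add (hd1.mul_left (-v)) (hd2.mul_left u)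
    have hj1 : ((j.val : ℤ)) < P := by rw [← hP']; exact_mod_cast j.isLt
    have hj2 : ((j'.val : ℤ)) < P := by rw [← hP']; exact_mod_cast j'.isLt
    have hj0 : (0:ℤ) ≤ (j.val : ℤ) := Int.natCast_nonneg _
    have hj0' : (0:ℤ) ≤ (j'.val : ℤ) := Int.natCast_nonneg _
    have hJ : (j.val : ℤ) - j'.val = 0 :=
      haux P _ (by linarith) (by linarith) (hcanc2 _ hc2)
    have hkk : k.val = k'.val := by
      have := sub_eq_zero.mp hK; exact_mod_cast this
    have hjj : j.val = j'.val := by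
      have := sub_eq_zero.mp hJ; exact_mod_cast this
    rw [Prod.mk.injEq]
    exact ⟨Fin.ext hkk, Fin.ext hjj⟩
  have hFsurj : Function.Surjective F := by
    rintro ⟨x, hx⟩
    obtain ⟨w, hwL, hwE⟩ := hsurjE x hx
    obtain ⟨a, b⟩ := w
    rw [hmemL] at hwL
    have hL1 : (Δ:ℤ) ∣ a * n - b * m := hwL.1
    have hL2 : (Δ:ℤ) ∣ a * r - b * ((m:ℤ) - s) := hwL.2
    obtain ⟨W1, hW1def⟩ : ∃ x : ℤ, x = -v * a + u * b := ⟨_, rfl⟩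
    obtain ⟨W2, hW2def⟩ : ∃ x : ℤ, x = cg * a + dg * b := ⟨_, rfl⟩
    have haid : -dg * W1 + u * W2 = a := by
      linear_combination a * hkey + (-dg) * hW1def + u * hW2def
    have hbid : cg * W1 + v * W2 = b := by
      linear_combination b * hkey + cg * hW1def + v * hW2def
    have hgw2 : (G0:ℤ) * W2 = a * r - b * ((m:ℤ) - s) := by
      linear_combination (-a) * hcg + (-b) * hdg + (G0:ℤ) * hW2def
    have hdvdW2 : (Δ:ℤ) ∣ (G0:ℤ) * W2 := by rw [hgw2]; exact hL2
    obtain ⟨k0, hk0⟩ := hcanc2 _ hdvdW2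
    have hrow1 : ε * P * W1 + q * W2 = a * n - b * m := by
      apply mul_left_cancel₀ hgne
      linear_combination (-(q * a)) * hcg + (-(q * b)) * hdg
        + (-(ε * u * b) + ε * v * a) * hP + (-(u * b) + v * a) * hεD
        + (u * b - v * a) * hDdef
        + (-((m:ℤ) * b) + (r:ℤ) * a + (s:ℤ) * b) * hq
        + (-((n:ℤ) * a) + (m:ℤ) * b) * hbez
        + ((G0:ℤ) * ε * P) * hW1def + ((G0:ℤ) * q) * hW2def
    have hdvd2 : (Δ:ℤ) ∣ P * (ε * W1 + q * k0) := by
      have he : P * (ε * W1 + q * k0) = a * n - b * m := by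
        linear_combination hrow1 + (-q) * hk0
      rw [he]; exact hL1
    have hG0div : (G0:ℤ) ∣ ε * W1 + q * k0 := hcanc1 _ hdvd2
    obtain ⟨K, hKdef⟩ : ∃ x : ℤ, x = k0 % (G0:ℤ) := ⟨_, rfl⟩
    have hK0 : 0 ≤ K := by rw [hKdef]; exact Int.emod_nonneg _ hgne
    have hKlt : K < (G0:ℤ) := by rw [hKdef]; exact Int.emod_lt_of_pos _ hgpos
    have hfloor : k0 - K = (G0:ℤ) * (k0 / (G0:ℤ)) := by
      rw [hKdef, Int.emod_def]; ring
    have hgj : (G0:ℤ) ∣ W1 + ε * q * K := by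
      have hident : W1 + ε * q * K = ε * (ε * W1 + q * k0) - ε * q * (k0 - K) := by
        linear_combination (-W1) * hεε
      rw [hident]
      exact dvd_sub (hG0div.mul_left ε) ((hfloor ▸ dvd_mul_right _ _ : (G0:ℤ) ∣ k0 - K).mul_left (ε * q))
    obtain ⟨j0, hj0⟩ := hgj
    obtain ⟨J, hJdef⟩ : ∃ x : ℤ, x = j0 % P := ⟨_, rfl⟩
    have hJ0 : 0 ≤ J := by rw [hJdef]; exact Int.emod_nonneg _ hPne
    have hJlt : J < P := by rw [hJdef]; exact Int.emod_lt_of_pos _ hPpos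
    have hfloorJ : j0 - J = P * (j0 / P) := by
      rw [hJdef, Int.emod_def]; ring
    have hKnat : K.toNat < G0 := by omega
    have hJnat : J.toNat < P' := by omega
    refine ⟨⟨⟨K.toNat, hKnat⟩, ⟨J.toNat, hJnat⟩⟩, ?_⟩
    apply Subtype.ext
    show E (((⟨K.toNat, hKnat⟩ : Fin G0).val : ℤ) * A1
        + ((⟨J.toNat, hJnat⟩ : Fin P').val : ℤ) * ((m:ℤ) - s),
        ((⟨K.toNat, hKnat⟩ : Fin G0).val : ℤ) * A2
        + ((⟨J.toNat, hJnat⟩ : Fin P').val : ℤ) * (r:ℤ)) = x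
    have hKc : (((⟨K.toNat, hKnat⟩ : Fin G0).val : ℕ) : ℤ) = K := by
      show ((K.toNat : ℕ) : ℤ) = K
      exact Int.toNat_of_nonneg hK0
    have hJc : (((⟨J.toNat, hJnat⟩ : Fin P').val : ℕ) : ℤ) = J := by
      show ((J.toNat : ℕ) : ℤ) = J
      exact Int.toNat_of_nonneg hJ0
    rw [← hwE]
    rw [hKc, hJc, hEinj]
    have hz1 : (Δ:ℤ) ∣ (-(ε * q * K) + (G0:ℤ) * J) - W1 := by
      obtain ⟨t, ht⟩ : P ∣ j0 - J := hfloorJ ▸ dvd_mul_right _ _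
      refine ⟨-t, ?_⟩
      linear_combination -hj0 + (-(G0:ℤ)) * ht + t * hP
    have hz2 : (Δ:ℤ) ∣ P * K - W2 := by
      refine ⟨-(k0 / (G0:ℤ)), ?_⟩
      linear_combination -hk0 + (-P) * hfloor + (k0 / (G0:ℤ)) * hP
    constructor
    · show (Δ:ℤ) ∣ (K * A1 + J * ((m:ℤ) - s)) - a
      have htgt : (K * A1 + J * ((m:ℤ) - s)) - a
          = -dg * ((-(ε * q * K) + (G0:ℤ) * J) - W1) + u * (P * K - W2) := by
        linear_combination haid + K * hA1def + (-J) * hdg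
      rw [htgt]
      exact dvd_add (hz1.mul_left (-dg)) (hz2.mul_left u)
    · show (Δ:ℤ) ∣ (K * A2 + J * (r:ℤ)) - b
      have htgt : (K * A2 + J * (r:ℤ)) - b
          = cg * ((-(ε * q * K) + (G0:ℤ) * J) - W1) + v * (P * K - W2) := by
        linear_combination hbid + K * hA2def + J * hcg
      rw [htgt]
      exact dvd_add (hz1.mul_left cg) (hz2.mul_left v)
  have hFbij : Function.Bijective F := ⟨hFinj, hFsurj⟩
  have hcard : Nat.card ↥G = Δ := by
    have h1 := Nat.card_eq_of_bijective F hFbij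
    simp only [Nat.card_prod, Nat.card_eq_fintype_card (α := Fin G0), Nat.card_eq_fintype_card (α := Fin P'), Fintype.card_fin] at h1
    rw [← h1, hG0P']
  refine ⟨hcard, ?_⟩
  have hfinG : Finite ↥G := Finite.of_surjective F hFbij.surjective
  have hΔD : Δ = D.natAbs := by rw [hΔdef, hDdef]
  constructor
  · -- cyclic → gcd = 1
    intro hcyc
    by_contra hne
    obtain ⟨ℓ, hldef⟩ : ∃ x : ℕ, x = (Nat.gcd (Nat.gcd m n) (Nat.gcd r s)).minFac := ⟨_, rfl⟩
    have hlprime : ℓ.Prime := hldef ▸ Nat.minFac_prime hne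
    have hlm : ℓ ∣ m :=
      ((hldef ▸ Nat.minFac_dvd _).trans (Nat.gcd_dvd_left _ _)).trans (Nat.gcd_dvd_left _ _)
    have hln : ℓ ∣ n :=
      ((hldef ▸ Nat.minFac_dvd _).trans (Nat.gcd_dvd_left _ _)).trans (Nat.gcd_dvd_right _ _)
    have hlr : ℓ ∣ r :=
      ((hldef ▸ Nat.minFac_dvd _).trans (Nat.gcd_dvd_right _ _)).trans (Nat.gcd_dvd_left _ _)
    have hls : ℓ ∣ s :=
      ((hldef ▸ Nat.minFac_dvd _).trans (Nat.gcd_dvd_right _ _)).trans (Nat.gcd_dvd_right _ _)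
    obtain ⟨m1, hm1⟩ := hlm
    obtain ⟨n1, hn1⟩ := hln
    obtain ⟨r1, hr1⟩ := hlr
    obtain ⟨s1, hs1⟩ := hls
    have hm1z : (m:ℤ) = (ℓ:ℤ) * m1 := by exact_mod_cast hm1
    have hn1z : (n:ℤ) = (ℓ:ℤ) * n1 := by exact_mod_cast hn1
    have hr1z : (r:ℤ) = (ℓ:ℤ) * r1 := by exact_mod_cast hr1
    have hs1z : (s:ℤ) = (ℓ:ℤ) * s1 := by exact_mod_cast hs1
    have hlΔ : ℓ ∣ Δ := by
      have h1 : (ℓ:ℤ) ∣ D := by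
        rw [hDdef]
        exact ⟨(n:ℤ) * m1 - (m:ℤ) * r1 - (n:ℤ) * s1,
          by linear_combination (n:ℤ) * hm1z - (m:ℤ) * hr1z - (n:ℤ) * hs1z⟩
      have h2 : (ℓ:ℤ).natAbs ∣ D.natAbs := Int.natAbs_dvd_natAbs.mpr h1
      simpa [← hΔD] using h2
    obtain ⟨Q, hQ⟩ := hlΔ
    have hQz : (Δ:ℤ) = (ℓ:ℤ) * Q := by exact_mod_cast hQ
    have hQne : (Q:ℤ) ≠ 0 := by
      have : Q ≠ 0 := by rintro rfl; omega
      exact_mod_cast this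
    have hYmem : ∀ a b : ℕ, (((a:ℤ) * Q, (b:ℤ) * Q) : ℤ × ℤ) ∈ L := by
      intro a b
      rw [hmemL]
      constructor
      · show (Δ:ℤ) ∣ ((a:ℤ) * Q) * n - ((b:ℤ) * Q) * m
        refine ⟨(a:ℤ) * n1 - (b:ℤ) * m1, ?_⟩
        linear_combination ((a:ℤ) * Q) * hn1z - ((b:ℤ) * Q) * hm1z
          - ((a:ℤ) * n1 - (b:ℤ) * m1) * hQz
      · show (Δ:ℤ) ∣ ((a:ℤ) * Q) * r - ((b:ℤ) * Q) * ((m:ℤ) - s)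
        refine ⟨(a:ℤ) * r1 - (b:ℤ) * (m1 - s1), ?_⟩
        linear_combination ((a:ℤ) * Q) * hr1z - ((b:ℤ) * Q) * hm1z + ((b:ℤ) * Q) * hs1z
          - ((a:ℤ) * r1 - (b:ℤ) * (m1 - s1)) * hQz
    have hYmemG : ∀ ab : Fin ℓ × Fin ℓ,
        E ((ab.1.val : ℤ) * Q, (ab.2.val : ℤ) * Q) ∈ G := fun ab => (hGL _).2 (hYmem _ _)
    set Y : Fin ℓ × Fin ℓ → ↥G := fun ab =>
      ⟨E ((ab.1.val : ℤ) * Q, (ab.2.val : ℤ) * Q), hYmemG ab⟩ with hYdef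
    have hYpow : ∀ ab : Fin ℓ × Fin ℓ, (Y ab) ^ ℓ = 1 := by
      intro ab
      apply Subtype.ext
      show (E ((ab.1.val : ℤ) * Q, (ab.2.val : ℤ) * Q)) ^ ℓ = 1
      have h1 : ((u0 ^ ((ab.1.val : ℤ) * Q)) ^ ℓ, (u0 ^ ((ab.2.val : ℤ) * Q)) ^ ℓ)
          = ((1:ℂˣ), (1:ℂˣ)) := by
        rw [hnatpow, hnatpow]
        rw [Prod.mk.injEq]
        constructor
        · rw [hupow]; exact ⟨(ab.1.val : ℤ), by linear_combination (-(ab.1.val : ℤ)) * hQz⟩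
        · rw [hupow]; exact ⟨(ab.2.val : ℤ), by linear_combination (-(ab.2.val : ℤ)) * hQz⟩
      exact h1
    have hcancQ : ∀ x : ℤ, (Δ:ℤ) ∣ (Q:ℤ) * x → (ℓ:ℤ) ∣ x := by
      rintro x ⟨t, ht⟩
      refine ⟨t, mul_left_cancel₀ hQne ?_⟩
      rw [ht, hQz]; ring
    have hYinj : Function.Injective Y := by
      rintro ⟨a, b⟩ ⟨a', b'⟩ hYeq
      have hEeq : E ((a.val : ℤ) * Q, (b.val : ℤ) * Q)
          = E ((a'.val : ℤ) * Q, (b'.val : ℤ) * Q) := congrArg Subtype.val hYeq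
      rw [hEinj] at hEeq
      have hd1 : (Δ:ℤ) ∣ (Q:ℤ) * ((a.val : ℤ) - a'.val) := by
        have he : (Q:ℤ) * ((a.val : ℤ) - a'.val)
            = ((a.val : ℤ) * Q) - ((a'.val : ℤ) * Q) := by ring
        rw [he]; exact hEeq.1
      have hd2 : (Δ:ℤ) ∣ (Q:ℤ) * ((b.val : ℤ) - b'.val) := by
        have he : (Q:ℤ) * ((b.val : ℤ) - b'.val)
            = ((b.val : ℤ) * Q) - ((b'.val : ℤ) * Q) := by ring
        rw [he]; exact hEeq.2
      have ha1 : ((a.val : ℤ)) < ℓ := by exact_mod_cast a.isLt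
      have ha2 : ((a'.val : ℤ)) < ℓ := by exact_mod_cast a'.isLt
      have hb1 : ((b.val : ℤ)) < ℓ := by exact_mod_cast b.isLt
      have hb2 : ((b'.val : ℤ)) < ℓ := by exact_mod_cast b'.isLt
      have ha0 : (0:ℤ) ≤ (a.val : ℤ) := Int.natCast_nonneg _
      have ha0' : (0:ℤ) ≤ (a'.val : ℤ) := Int.natCast_nonneg _
      have hb0 : (0:ℤ) ≤ (b.val : ℤ) := Int.natCast_nonneg _
      have hb0' : (0:ℤ) ≤ (b'.val : ℤ) := Int.natCast_nonneg _
      have hA : (a.val : ℤ) - a'.val = 0 :=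
        haux (ℓ:ℤ) _ (by linarith) (by linarith) (hcancQ _ hd1)
      have hB : (b.val : ℤ) - b'.val = 0 :=
        haux (ℓ:ℤ) _ (by linarith) (by linarith) (hcancQ _ hd2)
      rw [Prod.mk.injEq]
      constructor
      · apply Fin.ext; exact_mod_cast sub_eq_zero.mp hA
      · apply Fin.ext; exact_mod_cast sub_eq_zero.mp hB
    letI := Fintype.ofFinite ↥G
    classical
    have hle := IsCyclic.card_pow_eq_one_le (α := ↥G) (n := ℓ) hlprime.pos
    have hgge : ℓ * ℓ ≤ (Finset.univ.filter (fun g : ↥G => g ^ ℓ = 1)).card := by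
      have h1 : (Finset.univ : Finset (Fin ℓ × Fin ℓ)).card = ℓ * ℓ := by simp
      rw [← h1]
      apply Finset.card_le_card_of_injOn Y
      · intro ab _
        rw [Finset.mem_coe, Finset.mem_filter]
        exact ⟨Finset.mem_univ _, hYpow ab⟩
      · exact hYinj.injOn
    have h2 := hlprime.two_le
    have h3 : ℓ * ℓ ≤ ℓ * 1 := by rw [mul_one]; exact le_trans hgge hle
    have h4 := Nat.le_of_mul_le_mul_left h3 (by omega)
    omega
  · -- gcd = 1 → cyclic
    intro hgcd
    have hmem1 : (((m:ℤ), (n:ℤ)) : ℤ × ℤ) ∈ L := by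
      rw [hmemL]
      constructor
      · show (Δ:ℤ) ∣ (m:ℤ) * n - (n:ℤ) * m
        have he : (m:ℤ) * n - (n:ℤ) * m = 0 := by ring
        rw [he]; exact dvd_zero _
      · show (Δ:ℤ) ∣ (m:ℤ) * r - (n:ℤ) * ((m:ℤ) - s)
        refine ⟨-ε, ?_⟩
        linear_combination hDdef - hεD
    have hmem2 : ((((m:ℤ) - s), (r:ℤ)) : ℤ × ℤ) ∈ L := by
      rw [hmemL]
      constructor
      · show (Δ:ℤ) ∣ ((m:ℤ) - s) * n - (r:ℤ) * m
        refine ⟨ε, ?_⟩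
        linear_combination hεD - hDdef
      · show (Δ:ℤ) ∣ ((m:ℤ) - s) * r - (r:ℤ) * ((m:ℤ) - s)
        have he : ((m:ℤ) - s) * r - (r:ℤ) * ((m:ℤ) - s) = 0 := by ring
        rw [he]; exact dvd_zero _
    have hdvd : ∀ w : ℤ × ℤ, w ∈ L →
        (Δ:ℤ) ∣ w.1 * (Monoid.exponent ↥G : ℤ) ∧ (Δ:ℤ) ∣ w.2 * (Monoid.exponent ↥G : ℤ) := by
      intro w hw
      have hx : (⟨E w, (hGL w).2 hw⟩ : ↥G) ^ (Monoid.exponent ↥G) = 1 :=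
        Monoid.pow_exponent_eq_one _
      have hx' : (E w) ^ (Monoid.exponent ↥G) = 1 := congrArg Subtype.val hx
      have h1 : (u0 ^ w.1) ^ (Monoid.exponent ↥G) = 1 := congrArg Prod.fst hx'
      have h2 : (u0 ^ w.2) ^ (Monoid.exponent ↥G) = 1 := congrArg Prod.snd hx'
      rw [hnatpow, hupow] at h1 h2
      exact ⟨h1, h2⟩
    obtain ⟨hd1', hd2'⟩ := hdvd _ hmem1
    obtain ⟨hd3', hd4'⟩ := hdvd _ hmem2
    have hd1 : (Δ:ℤ) ∣ (m:ℤ) * (Monoid.exponent ↥G : ℤ) := hd1'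
    have hd2 : (Δ:ℤ) ∣ (n:ℤ) * (Monoid.exponent ↥G : ℤ) := hd2'
    have hd3 : (Δ:ℤ) ∣ ((m:ℤ) - s) * (Monoid.exponent ↥G : ℤ) := hd3'
    have hd4 : (Δ:ℤ) ∣ (r:ℤ) * (Monoid.exponent ↥G : ℤ) := hd4'
    have hdm : Δ ∣ m * Monoid.exponent ↥G := by exact_mod_cast hd1
    have hdn : Δ ∣ n * Monoid.exponent ↥G := by exact_mod_cast hd2
    have hdr : Δ ∣ r * Monoid.exponent ↥G := by exact_mod_cast hd4
    have hds : Δ ∣ s * Monoid.exponent ↥G := by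
      have h5 := dvd_sub hd1 hd3
      have he : (m:ℤ) * (Monoid.exponent ↥G : ℤ)
          - ((m:ℤ) - s) * (Monoid.exponent ↥G : ℤ)
          = (s:ℤ) * (Monoid.exponent ↥G : ℤ) := by ring
      rw [he] at h5
      exact_mod_cast h5
    have hΔe : Δ ∣ Monoid.exponent ↥G := by
      have hmn : Δ ∣ Nat.gcd m n * Monoid.exponent ↥G := by
        rw [← Nat.gcd_mul_right]; exact Nat.dvd_gcd hdm hdn
      have hrs : Δ ∣ Nat.gcd r s * Monoid.exponent ↥G := by
        rw [← Nat.gcd_mul_right]; exact Nat.dvd_gcd hdr hds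
      have h6 : Δ ∣ Nat.gcd (Nat.gcd m n * Monoid.exponent ↥G)
          (Nat.gcd r s * Monoid.exponent ↥G) := Nat.dvd_gcd hmn hrs
      rwa [Nat.gcd_mul_right, hgcd, one_mul] at h6
    have heΔ : Monoid.exponent ↥G ∣ Δ := hcard ▸ Group.exponent_dvd_nat_card
    have he : Monoid.exponent ↥G = Δ := Nat.dvd_antisymm heΔ hΔe
    obtain ⟨x, hx⟩ := Monoid.exists_orderOf_eq_exponent (G := ↥G) Monoid.ExponentExists.of_finite
    exact isCyclic_of_orderOf_eq_card x (by rw [hx, he, hcard])
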